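/- Let β > 0, w ∈ ℝ, and define g(y, x) = x·q̃(y)·y + (1 − x·q̃(y))·w where q̃(y) = e^{βy}/(e^{βy} + e^{βw}). Then for every fixed x > 0, ∂g/∂y = x·q̃(y)·(1 − q̃(y))·β·(y − w) + x·q̃(y), and the sign of ∂g/∂y equals the sign of y − C, where C = w − (W(e^{−1}) + 1)/β and W denotes the principal Lambert W function. -/

import Mathlib

open Real

theorem stmt17
    (β w : ℝ) (hβ : 0 < β)
    (qt : ℝ → ℝ)
    (hqt : ∀ y, qt y = exp (β * y) / (exp (β * y) + exp (β * w)))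
    (g : ℝ → ℝ → ℝ)
    (hg : ∀ y x, g y x = x * qt y * y + (1 - x * qt y) * w)
    (Wval : ℝ) (hWval : Wval * exp Wval = exp (-1)) (hWpos : 0 ≤ Wval)
    (C : ℝ) (hC : C = w - (Wval + 1) / β) :
    ∀ x : ℝ, 0 < x → ∀ y : ℝ,
      HasDerivAt (fun y' => g y' x)
        (x * qt y * (1 - qt y) * β * (y - w) + x * qt y) y ∧
      Real.sign (x * qt y * (1 - qt y) * β * (y - w) + x * qt y) =
        Real.sign (y - C) := by
  intro x hx y
  set A := exp (β * y) with hA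
  set B := exp (β * w) with hB
  have hApos : 0 < A := exp_pos _
  have hBpos : 0 < B := exp_pos _
  have hden : A + B ≠ 0 := by positivity
  constructor
  · -- derivative
    have h1 : HasDerivAt (fun y' : ℝ => exp (β * y')) (exp (β * y) * β) y := by
      simpa using ((hasDerivAt_id y).const_mul β).exp
    have h2 : HasDerivAt (fun y' : ℝ => exp (β * y') + exp (β * w))
        (exp (β * y) * β) y := h1.add_const _
    have hq : HasDerivAt (fun y' : ℝ => exp (β * y') / (exp (β * y') + exp (β * w)))
        ((exp (β * y) * β * (A + B) - A * (exp (β * y) * β)) / (A + B) ^ 2) y :=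
      h1.div h2 hden
    have hgfun : (fun y' => g y' x) = fun y' =>
        x * (exp (β * y') / (exp (β * y') + exp (β * w))) * y'
          + (1 - x * (exp (β * y') / (exp (β * y') + exp (β * w)))) * w := by
      funext y'; rw [hg, hqt]
    rw [hgfun]
    have hd := (((hq.const_mul x).mul (hasDerivAt_id y)).add
      (((hq.const_mul x).const_sub 1).mul_const w))
    convert hd using 1
    any_goals rfl
    rw [hqt]
    simp only [id, ← hA, ← hB]
    field_simp
    ring
  · -- sign
    have hexpz : exp (β * (y - w)) = A / B := by
      rw [mul_sub, exp_sub]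
    have key : x * qt y * (1 - qt y) * β * (y - w) + x * qt y
        = (x * A * B / (A + B) ^ 2) * (β * (y - w) + exp (β * (y - w)) + 1) := by
      rw [hqt, hexpz]
      field_simp
      ring
    have hpre : 0 < x * A * B / (A + B) ^ 2 := by positivity
    have hmono : StrictMono (fun z : ℝ => z + exp z + 1) := by
      have : StrictMono (fun z : ℝ => z + exp z) := strictMono_id.add exp_strictMono
      exact this.add_const 1
    have hWexp : exp (-(Wval + 1)) = Wval := by
      have : exp (-(Wval + 1)) = exp (-1) * exp (-Wval) := by
        rw [← exp_add]; ring_nf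
      rw [this, ← hWval, mul_assoc, ← exp_add, add_neg_cancel, exp_zero, mul_one]
    have hzero : (-(Wval + 1)) + exp (-(Wval + 1)) + 1 = 0 := by
      rw [hWexp]; ring
    have hyC : y - C = (β * (y - w) - (-(Wval + 1))) / β := by
      rw [hC]; field_simp; ring
    rw [key]
    rcases lt_trichotomy (β * (y - w)) (-(Wval + 1)) with h | h | h
    · have hφ : β * (y - w) + exp (β * (y - w)) + 1 < 0 := by
        have := hmono h
        dsimp only at this
        linarith
      have h1 : x * A * B / (A + B) ^ 2 * (β * (y - w) + exp (β * (y - w)) + 1) < 0 :=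
        mul_neg_of_pos_of_neg hpre hφ
      have h2 : y - C < 0 := by
        rw [hyC]; apply div_neg_of_neg_of_pos _ hβ; linarith
      rw [Real.sign_of_neg h1, Real.sign_of_neg h2]
    · have hφ : β * (y - w) + exp (β * (y - w)) + 1 = 0 := by rw [h]; exact hzero
      have h2 : y - C = 0 := by rw [hyC, h]; simp
      rw [hφ, mul_zero, h2]
    · have hφ : 0 < β * (y - w) + exp (β * (y - w)) + 1 := by
        have := hmono h
        dsimp only at this
        linarith
      have h1 : 0 < x * A * B / (A + B) ^ 2 * (β * (y - w) + exp (β * (y - w)) + 1) :=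
        mul_pos hpre hφ
      have h2 : 0 < y - C := by
        rw [hyC]; apply div_pos _ hβ; linarith
      rw [Real.sign_of_pos h1, Real.sign_of_pos h2]
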